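/- arXiv:2603.27893 — 2 statements merged into one kernel-verified Lean document; each statement's English description precedes it below -/
import Mathlib

section
/- (Lyapunov stability estimate in Theorem 1(b).) Under the hypotheses of the closed-loop Theorem 1 setting (ℓ ≥ 0, V_f ≥ 0, terminal conditions, 0 ≤ a < 1, 1 ≤ M ≤ N, a K-function α₁ with ℓ(y,w) ≥ α₁(‖y‖) for all y ∈ 𝕏, w ∈ 𝕌, and a closed-loop trajectory x(k+1) = f(x(k), u_k(0)) with u_k (a,M)-admissible at x(k) relative to an optimal pair for P_N(x(k))), suppose in addition there is a K-function β such that V_N*(y) ≤ β(‖y‖) for every y from which the N-feasible set is nonempty. Then α₁(‖x(k)‖) ≤ β(‖x(0)‖) for all k ∈ ℕ. -/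
section Framework

variable {S I : Type*}

/-- The trajectory generated by dynamics `f` from initial state `x` under input sequence `v`. -/
def traj (f : S → I → S) (x : S) (v : ℕ → I) : ℕ → S
  | 0 => x
  | k + 1 => f (traj f x v k) (v k)

/-- `v` is an `N`-feasible input sequence from `x`. -/
def Feasible (f : S → I → S) (X : Set S) (U : Set I) (Xf : Set S)
    (N : ℕ) (x : S) (v : ℕ → I) : Prop :=
  (∀ i < N, traj f x v i ∈ X ∧ v i ∈ U) ∧ traj f x v N ∈ Xf

/-- The MPC cost `V_N(x, v)`. -/
noncomputable def mpcCost (f : S → I → S) (l : S → I → ℝ) (Vf : S → ℝ)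
    (N : ℕ) (x : S) (v : ℕ → I) : ℝ :=
  (∑ i ∈ Finset.range N, l (traj f x v i) (v i)) + Vf (traj f x v N)

/-- `(v, z)` is an optimal pair for the problem `P_N(x)`. -/
def OptPair (f : S → I → S) (X : Set S) (U : Set I) (Xf : Set S)
    (l : S → I → ℝ) (Vf : S → ℝ) (N : ℕ) (x : S) (v : ℕ → I) (z : ℕ → S) : Prop :=
  Feasible f X U Xf N x v ∧ (∀ i, z i = traj f x v i) ∧
    ∀ w, Feasible f X U Xf N x w → mpcCost f l Vf N x v ≤ mpcCost f l Vf N x w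

/-- `u` is an `(a, M)`-admissible input sequence at `x`, relative to the optimal pair `(v, z)`. -/
def Adm (f : S → I → S) (X : Set S) (U : Set I) (l : S → I → ℝ)
    (a : ℝ) (M : ℕ) (x : S) (v : ℕ → I) (z : ℕ → S) (u : ℕ → I) : Prop :=
  (∀ i < M, traj f x u i ∈ X ∧ u i ∈ U) ∧
  ((∑ i ∈ Finset.range M, l (traj f x u i) (u i))
      - ∑ i ∈ Finset.range M, l (z i) (v i)) ≤ a * l x (u 0) ∧
  traj f x u M = z M

/-- The safety–stability set `𝕊(x)`. -/
def S2Set (f : S → I → S) (X : Set S) (U : Set I) (l : S → I → ℝ)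
    (a : ℝ) (M : ℕ) (x : S) (v : ℕ → I) (z : ℕ → S) : Set I :=
  {w | ∃ u, Adm f X U l a M x v z u ∧ u 0 = w}

/-- The value function `V_N^*`. -/
noncomputable def VStar (f : S → I → S) (X : Set S) (U : Set I) (Xf : Set S)
    (l : S → I → ℝ) (Vf : S → ℝ) (N : ℕ) (y : S) : ℝ :=
  sInf (mpcCost f l Vf N y '' {v | Feasible f X U Xf N y v})

/-- A K-function: continuous, strictly increasing on `[0, ∞)`, vanishing at `0`. -/
def IsKFun (α : ℝ → ℝ) : Prop :=
  Continuous α ∧ StrictMonoOn α (Set.Ici 0) ∧ α 0 = 0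

end Framework

section Aux

variable {S I : Type*}

lemma mpcCost_nonneg (f : S → I → S) (l : S → I → ℝ) (Vf : S → ℝ)
    (hl : ∀ y w, 0 ≤ l y w) (hVf : ∀ y, 0 ≤ Vf y) (N : ℕ) (x : S) (v : ℕ → I) :
    0 ≤ mpcCost f l Vf N x v := by
  have : 0 ≤ ∑ i ∈ Finset.range N, l (traj f x v i) (v i) :=
    Finset.sum_nonneg fun i _ => hl _ _
  have := hVf (traj f x v N)
  unfold mpcCost; linarith

lemma VStar_eq_of_opt (f : S → I → S) (X : Set S) (U : Set I) (Xf : Set S)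
    (l : S → I → ℝ) (Vf : S → ℝ) (N : ℕ) (x : S) (v : ℕ → I) (z : ℕ → S)
    (hopt : OptPair f X U Xf l Vf N x v z) :
    VStar f X U Xf l Vf N x = mpcCost f l Vf N x v := by
  apply le_antisymm
  · exact csInf_le ⟨mpcCost f l Vf N x v, by rintro c ⟨p, hp, rfl⟩; exact hopt.2.2 p hp⟩
      ⟨v, hopt.1, rfl⟩
  · exact le_csInf ⟨_, ⟨v, hopt.1, rfl⟩⟩ (by rintro c ⟨p, hp, rfl⟩; exact hopt.2.2 p hp)

lemma VStar_le_of_feasible (f : S → I → S) (X : Set S) (U : Set I) (Xf : Set S)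
    (l : S → I → ℝ) (Vf : S → ℝ) (hl : ∀ y w, 0 ≤ l y w) (hVf : ∀ y, 0 ≤ Vf y)
    (N : ℕ) (x : S) (w : ℕ → I) (hw : Feasible f X U Xf N x w) :
    VStar f X U Xf l Vf N x ≤ mpcCost f l Vf N x w :=
  csInf_le ⟨0, by rintro c ⟨p, _, rfl⟩; exact mpcCost_nonneg f l Vf hl hVf N x p⟩ ⟨w, hw, rfl⟩

lemma descent_step (f : S → I → S) (X : Set S) (U : Set I) (Xf : Set S)
    (l : S → I → ℝ) (Vf : S → ℝ) (N M : ℕ) (a : ℝ)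
    (hl : ∀ y w, 0 ≤ l y w) (hXfX : Xf ⊆ X)
    (hterm : ∀ y ∈ Xf, ∃ w ∈ U, f y w ∈ Xf ∧ Vf (f y w) ≤ Vf y - l y w)
    (ha1 : a < 1) (hM1 : 1 ≤ M) (hMN : M ≤ N)
    (x : S) (v : ℕ → I) (z : ℕ → S) (u : ℕ → I)
    (hopt : OptPair f X U Xf l Vf N x v z)
    (hadm : Adm f X U l a M x v z u) :
    ∃ w, Feasible f X U Xf N (f x (u 0)) w ∧
      mpcCost f l Vf N (f x (u 0)) w ≤ mpcCost f l Vf N x v := by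
  obtain ⟨K, rfl⟩ : ∃ K, N = K + 1 := ⟨N - 1, by omega⟩
  obtain ⟨⟨hvXU, hvXf⟩, hz, -⟩ := hopt
  obtain ⟨huXU, hsum, huM⟩ := hadm
  obtain ⟨wf, hwfU, hwfXf, hwfV⟩ := hterm _ hvXf
  have huvM : traj f x u M = traj f x v M := by rw [huM, hz]
  set x' := f x (u 0) with hx'
  set w : ℕ → I := fun i => if i + 1 < M then u (i+1) else if i + 1 < K + 1 then v (i+1) else wf
    with hw
  have key : ∀ i, i + 1 ≤ K + 1 →
      traj f x' w i = if i + 1 ≤ M then traj f x u (i+1) else traj f x v (i+1) := by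
    intro i
    induction i with
    | zero => intro _; rw [if_pos (by omega : 0 + 1 ≤ M)]; rfl
    | succ i ih =>
      intro hiN
      have hih := ih (by omega)
      show f (traj f x' w i) (w i) = _
      by_cases h1 : i + 1 + 1 ≤ M
      · rw [if_pos h1, hih, if_pos (by omega)]
        have hwi : w i = u (i+1) := by simp only [hw]; rw [if_pos (by omega)]
        rw [hwi]; rfl
      · rw [if_neg h1]
        have hwi : w i = v (i+1) := by
          simp only [hw]; rw [if_neg (by omega), if_pos (by omega)]
        by_cases h2 : i + 1 ≤ M
        · have hM : i + 1 = M := by omega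
          have hti : traj f x' w i = traj f x v (i+1) := by
            rw [hih, if_pos h2, hM, huvM]
          rw [hti, hwi]; rfl
        · have hti : traj f x' w i = traj f x v (i+1) := by rw [hih, if_neg h2]
          rw [hti, hwi]; rfl
  have hwK : w K = wf := by
    simp only [hw]; rw [if_neg (by omega), if_neg (by omega)]
  have hstateK : traj f x' w K = traj f x v (K+1) := by
    have hK := key K le_rfl
    by_cases h : K + 1 ≤ M
    · have hMK : M = K + 1 := le_antisymm hMN h
      rw [hK, if_pos h, ← hMK, huvM, hMK]
    · rw [hK, if_neg h]
  have hlast : traj f x' w (K+1) = f (traj f x v (K+1)) wf := by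
    show f (traj f x' w K) (w K) = _
    rw [hstateK, hwK]
  refine ⟨w, ⟨?_, ?_⟩, ?_⟩
  · intro i hi
    constructor
    · rw [key i (by omega)]
      by_cases h : i + 1 ≤ M
      · rw [if_pos h]
        by_cases h2 : i + 1 < M
        · exact (huXU (i+1) h2).1
        · have hiM : i + 1 = M := by omega
          rw [hiM, huvM]
          by_cases h3 : M < K + 1
          · exact (hvXU M h3).1
          · have : M = K + 1 := by omega
            rw [this]; exact hXfX hvXf
      · rw [if_neg h]
        by_cases h3 : i + 1 < K + 1
        · exact (hvXU (i+1) h3).1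
        · have : i + 1 = K + 1 := by omega
          rw [this]; exact hXfX hvXf
    · show (if i + 1 < M then u (i+1) else if i + 1 < K + 1 then v (i+1) else wf) ∈ U
      by_cases h1 : i + 1 < M
      · rw [if_pos h1]; exact (huXU _ h1).2
      · rw [if_neg h1]
        by_cases h2 : i + 1 < K + 1
        · rw [if_pos h2]; exact (hvXU _ h2).2
        · rw [if_neg h2]; exact hwfU
  · rw [hlast]; exact hwfXf
  · have hsum1 : ∑ i ∈ Finset.range K, l (traj f x' w i) (w i)
        = ∑ i ∈ Finset.range K,
            (if i + 1 < M then l (traj f x u (i+1)) (u (i+1))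
             else l (traj f x v (i+1)) (v (i+1))) := by
      apply Finset.sum_congr rfl
      intro i hi
      have hiK : i < K := Finset.mem_range.mp hi
      have hkey := key i (by omega)
      by_cases h1 : i + 1 < M
      · have hwi : w i = u (i+1) := by simp only [hw]; rw [if_pos h1]
        rw [if_pos h1, hkey, if_pos (by omega), hwi]
      · have hwi : w i = v (i+1) := by
          simp only [hw]; rw [if_neg h1, if_pos (by omega)]
        rw [if_neg h1]
        by_cases h2 : i + 1 ≤ M
        · have hiM : i + 1 = M := by omega
          rw [hkey, if_pos h2, hwi, hiM, huvM]
        · rw [hkey, if_neg h2, hwi]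
    have hsum2 : ∑ i ∈ Finset.range K,
            (if i + 1 < M then l (traj f x u (i+1)) (u (i+1))
             else l (traj f x v (i+1)) (v (i+1)))
        = ∑ j ∈ Finset.Ico 1 (K+1),
            (if j < M then l (traj f x u j) (u j) else l (traj f x v j) (v j)) := by
      rw [Finset.sum_Ico_eq_sum_range]
      simp only [Nat.add_sub_cancel]
      apply Finset.sum_congr rfl
      intro i _
      rw [add_comm 1 i]
    have hsplit : ∑ j ∈ Finset.Ico 1 (K+1),
            (if j < M then l (traj f x u j) (u j) else l (traj f x v j) (v j))
        = ∑ j ∈ Finset.Ico 1 M, l (traj f x u j) (u j)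
          + ∑ j ∈ Finset.Ico M (K+1), l (traj f x v j) (v j) := by
      rw [← Finset.sum_Ico_consecutive _ hM1 hMN]
      congr 1
      · exact Finset.sum_congr rfl fun j hj => if_pos (Finset.mem_Ico.mp hj).2
      · exact Finset.sum_congr rfl fun j hj =>
          if_neg (not_lt.mpr (Finset.mem_Ico.mp hj).1)
    have hIcoA : ∑ j ∈ Finset.Ico 1 M, l (traj f x u j) (u j)
        = ∑ j ∈ Finset.range M, l (traj f x u j) (u j) - l x (u 0) := by
      rw [Finset.sum_Ico_eq_sub _ hM1, Finset.sum_range_one]; rfl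
    have hIcoB : ∑ j ∈ Finset.Ico M (K+1), l (traj f x v j) (v j)
        = ∑ j ∈ Finset.range (K+1), l (traj f x v j) (v j)
          - ∑ j ∈ Finset.range M, l (traj f x v j) (v j) :=
      Finset.sum_Ico_eq_sub _ hMN
    have hzv : ∑ i ∈ Finset.range M, l (z i) (v i)
        = ∑ i ∈ Finset.range M, l (traj f x v i) (v i) :=
      Finset.sum_congr rfl fun i _ => by rw [hz]
    rw [hzv] at hsum
    have hKterm : l (traj f x' w K) (w K) = l (traj f x v (K+1)) wf := by
      rw [hstateK, hwK]
    have hlge : 0 ≤ l x (u 0) := hl _ _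
    show (∑ i ∈ Finset.range (K+1), l (traj f x' w i) (w i)) + Vf (traj f x' w (K+1))
        ≤ (∑ i ∈ Finset.range (K+1), l (traj f x v i) (v i)) + Vf (traj f x v (K+1))
    rw [Finset.sum_range_succ, hsum1, hsum2, hsplit, hIcoA, hIcoB, hKterm, hlast]
    nlinarith [hwfV, hl (traj f x v (K+1)) wf]

end Aux

/-- Lyapunov stability estimate in Theorem 1(b): with comparison functions `α₁` and `β`,
the closed-loop trajectory satisfies `α₁(‖x(k)‖) ≤ β(‖x(0)‖)` for all `k`. -/
theorem closed_loop_lyapunov_estimate {n m : ℕ}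
    (f : EuclideanSpace ℝ (Fin n) → EuclideanSpace ℝ (Fin m) → EuclideanSpace ℝ (Fin n))
    (X : Set (EuclideanSpace ℝ (Fin n))) (U : Set (EuclideanSpace ℝ (Fin m)))
    (Xf : Set (EuclideanSpace ℝ (Fin n)))
    (l : EuclideanSpace ℝ (Fin n) → EuclideanSpace ℝ (Fin m) → ℝ)
    (Vf : EuclideanSpace ℝ (Fin n) → ℝ)
    (N M : ℕ) (a : ℝ) (α₁ β : ℝ → ℝ)
    (hl : ∀ y w, 0 ≤ l y w)
    (hVf : ∀ y, 0 ≤ Vf y)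
    (hXfX : Xf ⊆ X)
    (hterm : ∀ y ∈ Xf, ∃ w ∈ U, f y w ∈ Xf ∧ Vf (f y w) ≤ Vf y - l y w)
    (ha0 : 0 ≤ a) (ha1 : a < 1) (hM1 : 1 ≤ M) (hMN : M ≤ N)
    (hα : IsKFun α₁)
    (hαl : ∀ y ∈ X, ∀ w ∈ U, α₁ ‖y‖ ≤ l y w)
    (hβ : IsKFun β)
    (hVβ : ∀ y : EuclideanSpace ℝ (Fin n), (∃ v, Feasible f X U Xf N y v) →
      VStar f X U Xf l Vf N y ≤ β ‖y‖)
    (x : ℕ → EuclideanSpace ℝ (Fin n))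
    (u : ℕ → ℕ → EuclideanSpace ℝ (Fin m))
    (vs : ℕ → ℕ → EuclideanSpace ℝ (Fin m))
    (zs : ℕ → ℕ → EuclideanSpace ℝ (Fin n))
    (hloop : ∀ k, OptPair f X U Xf l Vf N (x k) (vs k) (zs k) ∧
      Adm f X U l a M (x k) (vs k) (zs k) (u k) ∧ x (k + 1) = f (x k) (u k 0)) :
    ∀ k, α₁ ‖x k‖ ≤ β ‖x 0‖ := by
  have hVeq : ∀ k, VStar f X U Xf l Vf N (x k) = mpcCost f l Vf N (x k) (vs k) :=
    fun k => VStar_eq_of_opt f X U Xf l Vf N (x k) (vs k) (zs k) (hloop k).1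
  have hdec : ∀ k, VStar f X U Xf l Vf N (x (k+1)) ≤ VStar f X U Xf l Vf N (x k) := by
    intro k
    obtain ⟨hopt, hadm, hx⟩ := hloop k
    obtain ⟨w, hwfeas, hwcost⟩ := descent_step f X U Xf l Vf N M a hl hXfX hterm ha1 hM1 hMN
      (x k) (vs k) (zs k) (u k) hopt hadm
    rw [hVeq k, hx]
    exact le_trans (VStar_le_of_feasible f X U Xf l Vf hl hVf N _ w hwfeas) hwcost
  have hmono : ∀ k, VStar f X U Xf l Vf N (x k) ≤ VStar f X U Xf l Vf N (x 0) := by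
    intro k
    induction k with
    | zero => exact le_rfl
    | succ k ih => exact le_trans (hdec k) ih
  intro k
  have hlow : α₁ ‖x k‖ ≤ VStar f X U Xf l Vf N (x k) := by
    rw [hVeq k]
    obtain ⟨⟨hvXU, _⟩, _, _⟩ := (hloop k).1
    have h0 := hvXU 0 (by omega)
    have hx0 : traj f (x k) (vs k) 0 = x k := rfl
    rw [hx0] at h0
    have h1 : α₁ ‖x k‖ ≤ l (x k) (vs k 0) := hαl _ h0.1 _ h0.2
    have h2 : l (x k) (vs k 0) ≤ ∑ i ∈ Finset.range N, l (traj f (x k) (vs k) i) (vs k i) := by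
      have := Finset.single_le_sum (f := fun i => l (traj f (x k) (vs k) i) (vs k i))
        (fun i _ => hl _ _) (Finset.mem_range.mpr (by omega : 0 < N))
      exact this
    have h3 := hVf (traj f (x k) (vs k) N)
    unfold mpcCost
    linarith
  have hhigh : VStar f X U Xf l Vf N (x 0) ≤ β ‖x 0‖ :=
    hVβ (x 0) ⟨vs 0, (hloop 0).1.1⟩
  linarith [hmono k]
end

section
/- (Proposition 6: monotonicity in the filter horizon M.) Let (v*, z*) be an optimal pair for P_N(x), let a ∈ ℝ, and let 1 ≤ j ≤ i ≤ N. If u = (u(0),…,u(j−1)) is (a,j)-admissible at x, then the extended sequence (u(0),…,u(j−1), v*(j),…,v*(i−1)) is (a,i)-admissible at x. Consequently, the safety–stability sets satisfy the nested inclusion 𝕊_j(x) ⊆ 𝕊_i(x), where 𝕊_M(x) denotes the safety–stability set with filter horizon M. -/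
lemma traj_congr {S I : Type*} (f : S → I → S) (x : S) (u w : ℕ → I) :
    ∀ k, (∀ m < k, u m = w m) → traj f x u k = traj f x w k := by
  intro k
  induction k with
  | zero => intro _; rfl
  | succ k ih =>
    intro h
    simp only [traj, ih (fun m hm => h m (hm.trans (Nat.lt_succ_self k))),
      h k (Nat.lt_succ_self k)]

lemma traj_tail {S I : Type*} (f : S → I → S) (x : S) (u w : ℕ → I) (j : ℕ)
    (hj : traj f x u j = traj f x w j) (h : ∀ k, j ≤ k → u k = w k) :
    ∀ k, j ≤ k → traj f x u k = traj f x w k := by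
  intro k hk
  obtain ⟨d, rfl⟩ := Nat.exists_eq_add_of_le hk
  induction d with
  | zero => exact hj
  | succ d ih =>
    have he : j + (d + 1) = (j + d) + 1 := rfl
    rw [he]
    simp only [traj, ih (Nat.le_add_right j d), h (j + d) (Nat.le_add_right j d)]

/-- Proposition 6: monotonicity in the filter horizon. Extending an `(a, j)`-admissible
sequence by the nominal optimal inputs gives an `(a, i)`-admissible sequence, hence
`𝕊_j(x) ⊆ 𝕊_i(x)` for `j ≤ i`. -/
theorem sset_monotone_in_horizon {n m : ℕ}
    (f : EuclideanSpace ℝ (Fin n) → EuclideanSpace ℝ (Fin m) → EuclideanSpace ℝ (Fin n))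
    (X : Set (EuclideanSpace ℝ (Fin n))) (U : Set (EuclideanSpace ℝ (Fin m)))
    (Xf : Set (EuclideanSpace ℝ (Fin n)))
    (l : EuclideanSpace ℝ (Fin n) → EuclideanSpace ℝ (Fin m) → ℝ)
    (Vf : EuclideanSpace ℝ (Fin n) → ℝ)
    (N i j : ℕ) (a : ℝ) (x : EuclideanSpace ℝ (Fin n))
    (vs : ℕ → EuclideanSpace ℝ (Fin m)) (zs : ℕ → EuclideanSpace ℝ (Fin n))
    (hj1 : 1 ≤ j) (hji : j ≤ i) (hiN : i ≤ N)
    (hopt : OptPair f X U Xf l Vf N x vs zs) :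
    (∀ u, Adm f X U l a j x vs zs u →
      Adm f X U l a i x vs zs (fun k => if k < j then u k else vs k)) ∧
    S2Set f X U l a j x vs zs ⊆ S2Set f X U l a i x vs zs := by

  have hfeas := hopt.1
  have hz := hopt.2.1
  have main : ∀ u, Adm f X U l a j x vs zs u →
      Adm f X U l a i x vs zs (fun k => if k < j then u k else vs k) := by
    intro u hu
    set w : ℕ → EuclideanSpace ℝ (Fin m) := fun k => if k < j then u k else vs k with hw
    have hlt : ∀ k ≤ j, traj f x w k = traj f x u k := by
      intro k hk
      refine (traj_congr f x u w k ?_).symm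
      intro p hp
      simp [hw, lt_of_lt_of_le hp hk]
    have hbase : traj f x w j = traj f x vs j := by
      rw [hlt j le_rfl, hu.2.2, hz j]
    have hge : ∀ k, j ≤ k → traj f x w k = traj f x vs k := by
      refine traj_tail f x w vs j hbase ?_
      intro k hk
      simp [hw, Nat.not_lt.mpr hk]
    have hw0 : w 0 = u 0 := by simp [hw, Nat.lt_of_lt_of_le Nat.zero_lt_one hj1]
    refine ⟨?_, ?_, ?_⟩
    · intro k hk
      by_cases hkj : k < j
      · have := hu.1 k hkj
        rw [hlt k hkj.le]
        simpa [hw, hkj] using this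
      · have hjk := Nat.not_lt.mp hkj
        have := hfeas.1 k (lt_of_lt_of_le hk hiN)
        rw [hge k hjk]
        simpa [hw, hkj] using this
    · have hsplit : ∀ (g : ℕ → ℝ), ∑ k ∈ Finset.range i, g k
          = (∑ k ∈ Finset.range j, g k) + ∑ k ∈ Finset.Ico j i, g k := by
        intro g
        rw [Finset.range_eq_Ico, Finset.range_eq_Ico]
        exact (Finset.sum_Ico_consecutive g (Nat.zero_le j) hji).symm
      rw [hsplit, hsplit]
      have h1 : ∑ k ∈ Finset.range j, l (traj f x w k) (w k)
          = ∑ k ∈ Finset.range j, l (traj f x u k) (u k) := by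
        refine Finset.sum_congr rfl ?_
        intro k hk
        have hkj := Finset.mem_range.mp hk
        rw [hlt k hkj.le]
        simp [hw, hkj]
      have h2 : ∑ k ∈ Finset.Ico j i, l (traj f x w k) (w k)
          = ∑ k ∈ Finset.Ico j i, l (zs k) (vs k) := by
        refine Finset.sum_congr rfl ?_
        intro k hk
        have hjk := (Finset.mem_Ico.mp hk).1
        rw [hge k hjk, ← hz k]
        simp [hw, Nat.not_lt.mpr hjk]
      rw [h1, h2, hw0]
      have := hu.2.1
      linarith
    · rw [hge i hji, hz i]
  refine ⟨main, ?_⟩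
  rintro y ⟨u, hu, hu0⟩
  exact ⟨_, main u hu, by simpa [Nat.lt_of_lt_of_le Nat.zero_lt_one hj1] using hu0⟩
end
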